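/- Assume m is not constant on [0,1] and m' changes sign at most finitely many times on [0,1], i.e. there exists a partition 0 = t₀ < t₁ < ⋯ < t_N = 1 such that on each subinterval [t_{k−1}, t_k] either m'(x) ≥ 0 for all x or m'(x) ≤ 0 for all x. Then λ₁^{𝒩𝒟}(s) → ∞ as s → ∞ if and only if m is strictly increasing on [0,1]. -/

import Mathlib

open MeasureTheory Filter Set Topology intervalIntegral

/-- The mixed Neumann–Dirichlet principal eigenvalue of
`-φ'' - 2 s m' φ' + c φ = λ φ` on `(0,1)` with `φ'(0) = 0` and `φ(1) = 0`,
via its variational characterization. -/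
noncomputable def lambdaND (m c : ℝ → ℝ) (s : ℝ) : ℝ :=
  sInf {l : ℝ | ∃ φ : ℝ → ℝ, ContDiff ℝ 1 φ ∧ φ 1 = 0 ∧
    (∫ x in (0:ℝ)..1, Real.exp (2 * s * m x) * (φ x) ^ 2) = 1 ∧
    l = ∫ x in (0:ℝ)..1, Real.exp (2 * s * m x) * ((deriv φ x) ^ 2 + c x * (φ x) ^ 2)}

/-- Cauchy–Schwarz for interval integrals of continuous functions. -/
lemma cs_integral {f g : ℝ → ℝ} {a b : ℝ} (hab : a ≤ b) (hf : ContinuousOn f (Icc a b))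
    (hg : ContinuousOn g (Icc a b)) :
    (∫ x in a..b, f x * g x) ^ 2 ≤ (∫ x in a..b, f x ^ 2) * (∫ x in a..b, g x ^ 2) := by
  have hu : Set.uIcc a b = Icc a b := Set.uIcc_of_le hab
  have hif : IntervalIntegrable (fun x => f x ^ 2) volume a b :=
    ((hf.pow 2).mono (hu ▸ subset_rfl)).intervalIntegrable
  have hig : IntervalIntegrable (fun x => g x ^ 2) volume a b :=
    ((hg.pow 2).mono (hu ▸ subset_rfl)).intervalIntegrable
  have hifg : IntervalIntegrable (fun x => f x * g x) volume a b :=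
    ((hf.mul hg).mono (hu ▸ subset_rfl)).intervalIntegrable
  set A := ∫ x in a..b, f x ^ 2 with hA
  set B := ∫ x in a..b, f x * g x with hB
  set C := ∫ x in a..b, g x ^ 2 with hC
  have key : ∀ t : ℝ, 0 ≤ A * (t * t) + (2 * B) * t + C := by
    intro t
    have h1 : (∫ x in a..b, (t * f x + g x) ^ 2) = A * (t * t) + (2 * B) * t + C := by
      have : ∀ x : ℝ, (t * f x + g x) ^ 2
          = (t * t) * f x ^ 2 + (2 * t) * (f x * g x) + g x ^ 2 := by intro x; ring
      rw [intervalIntegral.integral_congr (g := fun x =>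
        (t * t) * f x ^ 2 + (2 * t) * (f x * g x) + g x ^ 2) (fun x _ => this x)]
      rw [intervalIntegral.integral_add ((hif.const_mul _).add (hifg.const_mul _)) hig,
        intervalIntegral.integral_add (hif.const_mul _) (hifg.const_mul _),
        intervalIntegral.integral_const_mul, intervalIntegral.integral_const_mul]
      ring
    have h2 : 0 ≤ ∫ x in a..b, (t * f x + g x) ^ 2 :=
      intervalIntegral.integral_nonneg hab (fun x _ => sq_nonneg _)
    linarith [h1 ▸ h2]
  have hd := discrim_le_zero key
  rw [discrim] at hd
  nlinarith [hd]

/-- If `f` is constant on `Iic a` and differentiable, its derivative vanishes on `Iic a`. -/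
lemma deriv_zero_of_constOn_Iic {f : ℝ → ℝ} {a k x : ℝ} (hf : DifferentiableAt ℝ f x)
    (h : ∀ y ∈ Iic a, f y = k) (hx : x ≤ a) : deriv f x = 0 := by
  have h' : ∀ y ∈ Iic x, f y = k := fun y hy => h y (le_trans hy hx)
  have h1 : HasDerivWithinAt f 0 (Iic x) x :=
    ((hasDerivAt_const x k).hasDerivWithinAt (s := Iic x)).congr h' (h' x (by simp))
  have h2 : derivWithin f (Iic x) x = 0 := h1.derivWithin (uniqueDiffOn_Iic x x self_mem_Iic)
  rw [← hf.derivWithin (uniqueDiffOn_Iic x x self_mem_Iic), h2]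

lemma deriv_zero_of_constOn_Ici {f : ℝ → ℝ} {a k x : ℝ} (hf : DifferentiableAt ℝ f x)
    (h : ∀ y ∈ Ici a, f y = k) (hx : a ≤ x) : deriv f x = 0 := by
  have h' : ∀ y ∈ Ici x, f y = k := fun y hy => h y (le_trans hx hy)
  have h1 : HasDerivWithinAt f 0 (Ici x) x :=
    ((hasDerivAt_const x k).hasDerivWithinAt (s := Ici x)).congr h' (h' x (by simp))
  have h2 : derivWithin f (Ici x) x = 0 := h1.derivWithin (uniqueDiffOn_Ici x x self_mem_Ici)
  rw [← hf.derivWithin (uniqueDiffOn_Ici x x self_mem_Ici), h2]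

open MeasureTheory Filter Set Topology intervalIntegral


def NDset (m c : ℝ → ℝ) (s : ℝ) : Set ℝ :=
  {l : ℝ | ∃ φ : ℝ → ℝ, ContDiff ℝ 1 φ ∧ φ 1 = 0 ∧
    (∫ x in (0:ℝ)..1, Real.exp (2 * s * m x) * (φ x) ^ 2) = 1 ∧
    l = ∫ x in (0:ℝ)..1, Real.exp (2 * s * m x) * ((deriv φ x) ^ 2 + c x * (φ x) ^ 2)}

lemma lambdaND_eq (m c : ℝ → ℝ) (s : ℝ) : lambdaND m c s = sInf (NDset m c s) := rfl

section basic

variable {m c : ℝ → ℝ} (hm : Continuous m) (hc : Continuous c)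

include hm in
/-- integrability of the standard integrands -/
lemma contW (s : ℝ) : Continuous (fun x => Real.exp (2 * s * m x)) := by
  exact (Real.continuous_exp.comp (continuous_const.mul hm))

include hm in
lemma intW2 (s : ℝ) {ψ : ℝ → ℝ} (hψ : Continuous ψ) {a b : ℝ} :
    IntervalIntegrable (fun x => Real.exp (2 * s * m x) * ψ x ^ 2) volume a b :=
  ((contW hm s).mul (hψ.pow 2)).intervalIntegrable a b

include hm hc in
lemma intWc2 (s : ℝ) {ψ : ℝ → ℝ} (hψ : Continuous ψ) {a b : ℝ} :
    IntervalIntegrable (fun x => Real.exp (2 * s * m x) * (c x * ψ x ^ 2)) volume a b :=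
  ((contW hm s).mul (hc.mul (hψ.pow 2))).intervalIntegrable a b

include hm hc in
lemma intWfull (s : ℝ) {ψ : ℝ → ℝ} (hψ : ContDiff ℝ 1 ψ) {a b : ℝ} :
    IntervalIntegrable
      (fun x => Real.exp (2 * s * m x) * ((deriv ψ x) ^ 2 + c x * ψ x ^ 2)) volume a b :=
  ((contW hm s).mul (((hψ.continuous_deriv le_rfl).pow 2).add
    (hc.mul (hψ.continuous.pow 2)))).intervalIntegrable a b

/-- Membership in the Rayleigh set after normalization. -/
lemma ratio_mem (s : ℝ) {ψ : ℝ → ℝ} (hψ : ContDiff ℝ 1 ψ) (hψ1 : ψ 1 = 0)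
    (hD : 0 < ∫ x in (0:ℝ)..1, Real.exp (2 * s * m x) * ψ x ^ 2) :
    (∫ x in (0:ℝ)..1, Real.exp (2 * s * m x) * ((deriv ψ x) ^ 2 + c x * ψ x ^ 2)) /
      (∫ x in (0:ℝ)..1, Real.exp (2 * s * m x) * ψ x ^ 2) ∈ NDset m c s := by
  set D := ∫ x in (0:ℝ)..1, Real.exp (2 * s * m x) * ψ x ^ 2 with hDdef
  set r := (Real.sqrt D)⁻¹ with hr
  have hr2 : r ^ 2 = D⁻¹ := by
    rw [hr, inv_pow, Real.sq_sqrt hD.le]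
  refine ⟨fun x => r * ψ x, contDiff_const.mul hψ, by simp [hψ1], ?_, ?_⟩
  · have : ∀ x : ℝ, Real.exp (2 * s * m x) * (r * ψ x) ^ 2
        = r ^ 2 * (Real.exp (2 * s * m x) * ψ x ^ 2) := fun x => by ring
    rw [intervalIntegral.integral_congr (fun x _ => this x),
      intervalIntegral.integral_const_mul, hr2, ← hDdef]
    exact inv_mul_cancel₀ hD.ne'
  · have hder : ∀ x : ℝ, deriv (fun y => r * ψ y) x = r * deriv ψ x := fun x =>
      deriv_const_mul r (hψ.differentiable one_ne_zero x)
    have : ∀ x : ℝ, Real.exp (2 * s * m x) *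
        ((deriv (fun y => r * ψ y) x) ^ 2 + c x * (r * ψ x) ^ 2)
        = r ^ 2 * (Real.exp (2 * s * m x) * ((deriv ψ x) ^ 2 + c x * ψ x ^ 2)) := by
      intro x; rw [hder x]; ring
    rw [intervalIntegral.integral_congr (fun x _ => this x),
      intervalIntegral.integral_const_mul, hr2, div_eq_inv_mul]

include hm hc in
/-- Every element of the Rayleigh set is at least the Dirichlet energy minus `C`. -/
lemma mem_lower_bound (s : ℝ) {C : ℝ} (hC : ∀ x ∈ Icc (0:ℝ) 1, |c x| ≤ C) {l : ℝ}
    (hl : l ∈ NDset m c s) :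
    ∃ φ : ℝ → ℝ, ContDiff ℝ 1 φ ∧ φ 1 = 0 ∧
      (∫ x in (0:ℝ)..1, Real.exp (2 * s * m x) * (φ x) ^ 2) = 1 ∧
      (∫ x in (0:ℝ)..1, Real.exp (2 * s * m x) * (deriv φ x) ^ 2) - C ≤ l := by
  obtain ⟨φ, hφ, hφ1, hnorm, hleq⟩ := hl
  refine ⟨φ, hφ, hφ1, hnorm, ?_⟩
  have h1 : l = (∫ x in (0:ℝ)..1, Real.exp (2 * s * m x) * (deriv φ x) ^ 2)
      + ∫ x in (0:ℝ)..1, Real.exp (2 * s * m x) * (c x * (φ x) ^ 2) := by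
    rw [hleq, ← intervalIntegral.integral_add (intW2 hm s (hφ.continuous_deriv le_rfl))
      (intWc2 hm hc s hφ.continuous)]
    exact intervalIntegral.integral_congr (fun x _ => by ring)
  have h2 : (∫ x in (0:ℝ)..1, (-C) * (Real.exp (2 * s * m x) * (φ x) ^ 2))
      ≤ ∫ x in (0:ℝ)..1, Real.exp (2 * s * m x) * (c x * (φ x) ^ 2) := by
    apply intervalIntegral.integral_mono_on zero_le_one
      ((intW2 hm s hφ.continuous).const_mul _) (intWc2 hm hc s hφ.continuous)
    intro x hx
    have hcx : -C ≤ c x := neg_le_of_abs_le (hC x hx)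
    have hw : 0 ≤ Real.exp (2 * s * m x) * (φ x) ^ 2 :=
      mul_nonneg (Real.exp_pos _).le (sq_nonneg _)
    nlinarith [mul_le_mul_of_nonneg_right hcx hw]
  rw [intervalIntegral.integral_const_mul, hnorm] at h2
  linarith

include hm hc in
lemma ndset_bddBelow (s : ℝ) {C : ℝ} (hC : ∀ x ∈ Icc (0:ℝ) 1, |c x| ≤ C) :
    BddBelow (NDset m c s) := by
  refine ⟨-C, fun l hl => ?_⟩
  obtain ⟨φ, hφ, -, -, hle⟩ := mem_lower_bound hm hc s hC hl
  have : 0 ≤ ∫ x in (0:ℝ)..1, Real.exp (2 * s * m x) * (deriv φ x) ^ 2 :=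
    intervalIntegral.integral_nonneg zero_le_one
      (fun x _ => mul_nonneg (Real.exp_pos _).le (sq_nonneg _))
  linarith

include hm in
lemma ndset_nonempty (s : ℝ) : (NDset m c s).Nonempty := by
  have hψ : ContDiff ℝ 1 (fun x : ℝ => 1 - x) := contDiff_const.sub contDiff_id
  have hD : 0 < ∫ x in (0:ℝ)..1, Real.exp (2 * s * m x) * (1 - x) ^ 2 := by
    refine intervalIntegral.intervalIntegral_pos_of_pos_on
      (intW2 hm s (by continuity)) (fun x hx => ?_) one_pos
    exact mul_pos (Real.exp_pos _) (pow_pos (by linarith [hx.2]) 2)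
  exact ⟨_, ratio_mem s hψ (by simp) hD⟩

end basic

section upper
variable {m c : ℝ → ℝ} (hm : Continuous m) (hc : Continuous c)

include hm hc in
/-- If `m` is antitone on some subinterval, `lambdaND` is bounded above for `s ≥ 0`. -/
lemma lambdaND_bounded_of_antitone {C : ℝ} (hC : ∀ x ∈ Icc (0:ℝ) 1, |c x| ≤ C)
    {α β : ℝ} (h0 : 0 ≤ α) (hαβ : α < β) (hβ : β ≤ 1)
    (hanti : AntitoneOn m (Icc α β)) :
    ∃ K : ℝ, ∀ s : ℝ, 0 ≤ s → lambdaND m c s ≤ K := by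
  set γ := (α + β) / 2 with hγ
  have hαγ : α < γ := by rw [hγ]; linarith
  have hγβ : γ < β := by rw [hγ]; linarith
  have hβγ : 0 < β - γ := by linarith
  set φ : ℝ → ℝ := fun x => Real.smoothTransition ((β - x) / (β - γ)) with hφdef
  have hφ : ContDiff ℝ 1 φ := by
    exact (Real.smoothTransition.contDiff (n := 1)).comp
      ((contDiff_const.sub contDiff_id).div_const _)
  have hφone : ∀ x ∈ Iic γ, φ x = 1 := by
    intro x hx
    apply Real.smoothTransition.one_of_one_le
    rw [le_div_iff₀ hβγ]
    simp only [one_mul]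
    linarith [mem_Iic.mp hx]
  have hφzero : ∀ x ∈ Ici β, φ x = 0 := by
    intro x hx
    apply Real.smoothTransition.zero_of_nonpos
    apply div_nonpos_of_nonpos_of_nonneg _ hβγ.le
    linarith [mem_Ici.mp hx]
  have hφ1 : φ 1 = 0 := hφzero 1 hβ
  have hφdiff : ∀ x : ℝ, DifferentiableAt ℝ φ x := fun x => (hφ.differentiable one_ne_zero) x
  have hd1 : ∀ x ≤ γ, deriv φ x = 0 := fun x hx =>
    deriv_zero_of_constOn_Iic (hφdiff x) hφone hx
  have hd2 : ∀ x, β ≤ x → deriv φ x = 0 := fun x hx =>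
    deriv_zero_of_constOn_Ici (hφdiff x) hφzero hx
  set K0 := ∫ x in γ..β, (deriv φ x) ^ 2 with hK0
  have hK0nonneg : 0 ≤ K0 :=
    intervalIntegral.integral_nonneg hγβ.le (fun x _ => sq_nonneg _)
  refine ⟨C + K0 / (γ - α), fun s hs => ?_⟩
  set w : ℝ → ℝ := fun x => Real.exp (2 * s * m x) with hw
  set E := Real.exp (2 * s * m γ) with hE
  have hwcont : Continuous w := contW hm s
  have hφcont : Continuous φ := hφ.continuous
  have hφ'cont : Continuous (deriv φ) := hφ.continuous_deriv le_rfl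
  -- D ≥ (γ - α) * E
  set D := ∫ x in (0:ℝ)..1, w x * (φ x) ^ 2 with hD
  have hDa : (γ - α) * E ≤ D := by
    have step1 : ∫ x in α..γ, w x * (φ x) ^ 2 ≤ D := by
      apply intervalIntegral.integral_mono_interval h0 hαγ.le (by linarith)
      · filter_upwards with x
        exact mul_nonneg (Real.exp_pos _).le (sq_nonneg _)
      · exact intW2 hm s hφcont
    have step2 : ∫ x in α..γ, (E : ℝ) ≤ ∫ x in α..γ, w x * (φ x) ^ 2 := by
      apply intervalIntegral.integral_mono_on hαγ.le intervalIntegrable_const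
        (intW2 hm s hφcont)
      intro x hx
      have hmx : m γ ≤ m x := hanti ⟨hx.1, (hx.2.trans hγβ.le)⟩ ⟨hαγ.le, hγβ.le⟩ hx.2
      have hwx : E ≤ w x := by
        rw [hE, hw]
        exact Real.exp_le_exp.mpr (by nlinarith)
      have : φ x = 1 := hφone x hx.2
      rw [this]
      nlinarith
    rw [intervalIntegral.integral_const, smul_eq_mul] at step2
    linarith
  have hEpos : 0 < E := Real.exp_pos _
  have hDpos : 0 < D := lt_of_lt_of_le (by nlinarith) hDa
  -- numerator deriv part ≤ E * K0
  have hN' : (∫ x in (0:ℝ)..1, w x * (deriv φ x) ^ 2) ≤ E * K0 := by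
    have hint : ∀ a b : ℝ, IntervalIntegrable (fun x => w x * (deriv φ x) ^ 2) volume a b :=
      fun a b => intW2 hm s hφ'cont
    have hsplit : (∫ x in (0:ℝ)..1, w x * (deriv φ x) ^ 2)
        = (∫ x in (0:ℝ)..γ, w x * (deriv φ x) ^ 2) + ((∫ x in γ..β, w x * (deriv φ x) ^ 2)
          + ∫ x in β..(1:ℝ), w x * (deriv φ x) ^ 2) := by
      rw [intervalIntegral.integral_add_adjacent_intervals (hint γ β) (hint β 1),
        intervalIntegral.integral_add_adjacent_intervals (hint 0 γ) (hint γ 1)]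
    have hz1 : (∫ x in (0:ℝ)..γ, w x * (deriv φ x) ^ 2) = 0 := by
      rw [intervalIntegral.integral_congr (g := fun _ => (0:ℝ)) ?_, intervalIntegral.integral_zero]
      intro x hx
      rw [Set.uIcc_of_le (by linarith : (0:ℝ) ≤ γ)] at hx
      show w x * deriv φ x ^ 2 = 0
      rw [hd1 x hx.2]; ring
    have hz2 : (∫ x in β..(1:ℝ), w x * (deriv φ x) ^ 2) = 0 := by
      rw [intervalIntegral.integral_congr (g := fun _ => (0:ℝ)) ?_, intervalIntegral.integral_zero]
      intro x hx
      rw [Set.uIcc_of_le hβ] at hx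
      show w x * deriv φ x ^ 2 = 0
      rw [hd2 x hx.1]; ring
    have hmid : (∫ x in γ..β, w x * (deriv φ x) ^ 2) ≤ ∫ x in γ..β, E * (deriv φ x) ^ 2 := by
      apply intervalIntegral.integral_mono_on hγβ.le (intW2 hm s hφ'cont)
        ((continuous_const.mul (hφ'cont.pow 2)).intervalIntegrable _ _)
      intro x hx
      have hmx : m x ≤ m γ := hanti ⟨hαγ.le, hγβ.le⟩ ⟨hαγ.le.trans hx.1, hx.2⟩ hx.1
      have hwx : w x ≤ E := by
        rw [hE, hw]
        exact Real.exp_le_exp.mpr (by nlinarith)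
      show w x * (deriv φ x) ^ 2 ≤ E * (deriv φ x) ^ 2
      nlinarith [sq_nonneg (deriv φ x)]
    rw [intervalIntegral.integral_const_mul] at hmid
    rw [hsplit, hz1, hz2]
    rw [← hK0] at hmid
    linarith
  -- numerator c-part ≤ C * D
  have hNc : (∫ x in (0:ℝ)..1, w x * (c x * (φ x) ^ 2)) ≤ C * D := by
    have : (∫ x in (0:ℝ)..1, w x * (c x * (φ x) ^ 2))
        ≤ ∫ x in (0:ℝ)..1, C * (w x * (φ x) ^ 2) := by
      apply intervalIntegral.integral_mono_on zero_le_one (intWc2 hm hc s hφcont)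
        ((intW2 hm s hφcont).const_mul _)
      intro x hx
      have hcx : c x ≤ C := le_of_abs_le (hC x hx)
      have hwp : 0 ≤ w x * (φ x) ^ 2 := mul_nonneg (Real.exp_pos _).le (sq_nonneg _)
      nlinarith [mul_le_mul_of_nonneg_right hcx hwp]
    rw [intervalIntegral.integral_const_mul] at this
    exact this
  -- assemble
  set N := ∫ x in (0:ℝ)..1, w x * ((deriv φ x) ^ 2 + c x * (φ x) ^ 2) with hNdef
  have hNsplit : N = (∫ x in (0:ℝ)..1, w x * (deriv φ x) ^ 2)
      + ∫ x in (0:ℝ)..1, w x * (c x * (φ x) ^ 2) := by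
    rw [hNdef, ← intervalIntegral.integral_add (intW2 hm s hφ'cont) (intWc2 hm hc s hφcont)]
    exact intervalIntegral.integral_congr (fun x _ => by ring)
  have hNle : N ≤ C * D + E * K0 := by
    rw [hNsplit]
    linarith
  have hmem : N / D ∈ NDset m c s := ratio_mem (m := m) (c := c) s hφ hφ1 hDpos
  have h1 : lambdaND m c s ≤ N / D := by
    rw [lambdaND_eq]
    exact csInf_le (ndset_bddBelow hm hc s hC) hmem
  have h2 : N / D ≤ C + K0 / (γ - α) := by
    rw [div_le_iff₀ hDpos]
    have hγα : (0:ℝ) < γ - α := by linarith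
    set Q := K0 / (γ - α) with hQ
    have hQK : K0 = Q * (γ - α) := by
      rw [hQ, div_mul_cancel₀ _ (by linarith : γ - α ≠ 0)]
    have hQnonneg : 0 ≤ Q := div_nonneg hK0nonneg hγα.le
    nlinarith [mul_le_mul_of_nonneg_left hDa hQnonneg]
  exact h1.trans h2

end upper

section combinat

/-- From the sign-change hypothesis and failure of strict monotonicity, extract an
interval on which `m` is antitone. -/
lemma exists_antitone_interval {m : ℝ → ℝ} (hm : ContDiff ℝ 2 m)
    (hsign : ∃ N : ℕ, 0 < N ∧ ∃ t : ℕ → ℝ, t 0 = 0 ∧ t N = 1 ∧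
      (∀ k < N, t k < t (k + 1)) ∧
      (∀ k < N, (∀ x ∈ Set.Icc (t k) (t (k + 1)), 0 ≤ deriv m x) ∨
                (∀ x ∈ Set.Icc (t k) (t (k + 1)), deriv m x ≤ 0)))
    (hns : ¬ StrictMonoOn m (Set.Icc (0:ℝ) 1)) :
    ∃ α β : ℝ, 0 ≤ α ∧ α < β ∧ β ≤ 1 ∧ AntitoneOn m (Set.Icc α β) := by
  obtain ⟨N, hN, t, ht0, htN, htlt, halt⟩ := hsign
  have hmc : Continuous m := hm.continuous
  -- t is monotone on indices ≤ N
  have htmono : ∀ i j, i ≤ j → j ≤ N → t i ≤ t j := by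
    intro i j hij hjN
    induction j with
    | zero => simpa [Nat.le_zero.mp hij]
    | succ n ih =>
      rcases Nat.lt_or_ge i (n+1) with h | h
      · have : i ≤ n := Nat.lt_succ_iff.mp h
        exact le_trans (ih this (Nat.le_of_succ_le hjN)) (htlt n (Nat.lt_of_succ_le hjN)).le
      · have : i = n + 1 := le_antisymm hij h
        simp [this]
  by_cases hA : ∃ k < N, ∀ x ∈ Set.Icc (t k) (t (k + 1)), deriv m x ≤ 0
  · obtain ⟨k, hk, hneg⟩ := hA
    refine ⟨t k, t (k+1), ?_, htlt k hk, ?_, ?_⟩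
    · rw [← ht0]; exact htmono 0 k (Nat.zero_le _) hk.le
    · rw [← htN]; exact htmono (k+1) N (Nat.succ_le_of_lt hk) le_rfl
    · apply antitoneOn_of_deriv_nonpos (convex_Icc _ _) hmc.continuousOn
        ((hm.differentiable (by norm_num)).differentiableOn)
      intro x hx
      rw [interior_Icc] at hx
      exact hneg x ⟨hx.1.le, hx.2.le⟩
  · push_neg at hA
    -- all pieces have nonneg derivative, so deriv m ≥ 0 on [0,1]
    have hcover : ∀ x ∈ Set.Icc (0:ℝ) 1, ∃ k < N, x ∈ Set.Icc (t k) (t (k+1)) := by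
      intro x hx
      have key : ∀ n : ℕ, 0 < n → n ≤ N → x ≤ t n → ∃ k < n, x ∈ Set.Icc (t k) (t (k+1)) := by
        intro n
        induction n with
        | zero => intro h; exact absurd h (lt_irrefl 0)
        | succ n ih =>
          intro _ hnN hxn
          rcases Nat.eq_zero_or_pos n with h0 | hpos
          · subst h0
            exact ⟨0, Nat.zero_lt_one, ⟨ht0 ▸ hx.1, hxn⟩⟩
          · rcases le_or_gt x (t n) with hle | hlt
            · obtain ⟨k, hk, hmem⟩ := ih hpos (Nat.le_of_succ_le hnN) hle
              exact ⟨k, Nat.lt_succ_of_lt hk, hmem⟩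
            · exact ⟨n, Nat.lt_succ_self n, ⟨hlt.le, hxn⟩⟩
      exact key N hN le_rfl (htN ▸ hx.2)
    have hpos' : ∀ x ∈ Set.Icc (0:ℝ) 1, 0 ≤ deriv m x := by
      intro x hx
      obtain ⟨k, hk, hmem⟩ := hcover x hx
      rcases halt k hk with h | h
      · exact h x hmem
      · obtain ⟨y, hy, hypos⟩ := hA k hk
        linarith [h y hy]
    have hmono : MonotoneOn m (Set.Icc (0:ℝ) 1) := by
      apply monotoneOn_of_deriv_nonneg (convex_Icc _ _) hmc.continuousOn
        ((hm.differentiable (by norm_num)).differentiableOn)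
      intro x hx
      rw [interior_Icc] at hx
      exact hpos' x ⟨hx.1.le, hx.2.le⟩
    rw [StrictMonoOn] at hns
    push_neg at hns
    obtain ⟨a, ha, b, hb, hab, hnlt⟩ := hns
    have heq : m a = m b := le_antisymm (hmono ha hb hab.le) hnlt
    refine ⟨a, b, ha.1, hab, hb.2, ?_⟩
    intro x hx y hy hxy
    have hx' := Set.mem_of_mem_of_subset hx (Set.Icc_subset_Icc ha.1 hb.2)
    have hy' := Set.mem_of_mem_of_subset hy (Set.Icc_subset_Icc ha.1 hb.2)
    have h1 : m a ≤ m x := hmono ha hx' hx.1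
    have h2 : m y ≤ m b := hmono hy' hb hy.2
    linarith [heq]

end combinat
section backward

variable {m c : ℝ → ℝ} (hm : Continuous m) (hc : Continuous c)

/-- The inner decay integral. -/
noncomputable def innerInt (m : ℝ → ℝ) (s x : ℝ) : ℝ :=
  ∫ t in x..1, Real.exp (2 * s * (m x - m t))

/-- The double decay integral. -/
noncomputable def FF (m : ℝ → ℝ) (s : ℝ) : ℝ :=
  ∫ x in (0:ℝ)..1, innerInt m s x

include hm in
lemma innerInt_continuous (s : ℝ) : Continuous (innerInt m s) := by
  have h1 : Continuous (fun t => Real.exp (-(2 * s * m t))) :=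
    Real.continuous_exp.comp (continuous_const.mul hm).neg
  have heq : ∀ x : ℝ, innerInt m s x
      = Real.exp (2 * s * m x) * ∫ t in x..1, Real.exp (-(2 * s * m t)) := by
    intro x
    rw [innerInt, ← intervalIntegral.integral_const_mul]
    refine intervalIntegral.integral_congr (fun t _ => ?_)
    rw [← Real.exp_add]
    ring_nf
  have h2 : Continuous fun x => ∫ t in x..1, Real.exp (-(2 * s * m t)) := by
    have h3 : ∀ x : ℝ, (∫ t in x..1, Real.exp (-(2 * s * m t)))
        = (∫ t in (0:ℝ)..1, Real.exp (-(2 * s * m t)))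
          - ∫ t in (0:ℝ)..x, Real.exp (-(2 * s * m t)) := by
      intro x
      rw [← intervalIntegral.integral_add_adjacent_intervals
        (h1.intervalIntegrable 0 x) (h1.intervalIntegrable x 1)]
      ring
    have h4 : Continuous fun x : ℝ => (∫ t in (0:ℝ)..1, Real.exp (-(2 * s * m t)))
        - ∫ t in (0:ℝ)..x, Real.exp (-(2 * s * m t)) :=
      continuous_const.sub
        (intervalIntegral.continuous_primitive (fun a b => h1.intervalIntegrable a b) 0)
    exact h4.congr (fun x => (h3 x).symm)
  have : Continuous fun x => Real.exp (2 * s * m x) *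
      ∫ t in x..1, Real.exp (-(2 * s * m t)) := (contW hm s).mul h2
  exact (funext heq : innerInt m s = _) ▸ this

include hm in
lemma FF_pos (s : ℝ) : 0 < FF m s := by
  refine intervalIntegral.intervalIntegral_pos_of_pos_on
    (((innerInt_continuous hm s)).intervalIntegrable 0 1) (fun x hx => ?_) one_pos
  refine intervalIntegral.intervalIntegral_pos_of_pos_on
    ((Real.continuous_exp.comp (by fun_prop)).intervalIntegrable x 1)
    (fun t _ => Real.exp_pos _) hx.2

include hm in
/-- The key Cauchy–Schwarz estimate: `∫ w φ² ≤ FF s * ∫ w φ'²`. -/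
lemma key_cs (s : ℝ) {φ : ℝ → ℝ} (hφ : ContDiff ℝ 1 φ) (hφ1 : φ 1 = 0) :
    (∫ x in (0:ℝ)..1, Real.exp (2 * s * m x) * (φ x) ^ 2)
      ≤ FF m s * ∫ x in (0:ℝ)..1, Real.exp (2 * s * m x) * (deriv φ x) ^ 2 := by
  set A := ∫ x in (0:ℝ)..1, Real.exp (2 * s * m x) * (deriv φ x) ^ 2 with hA
  have hφ' : Continuous (deriv φ) := hφ.continuous_deriv le_rfl
  have hAnonneg : 0 ≤ A := intervalIntegral.integral_nonneg zero_le_one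
    (fun x _ => mul_nonneg (Real.exp_pos _).le (sq_nonneg _))
  have hptwise : ∀ x ∈ Icc (0:ℝ) 1,
      Real.exp (2 * s * m x) * (φ x) ^ 2 ≤ innerInt m s x * A := by
    intro x hx
    have hx1 : x ≤ 1 := hx.2
    -- fundamental theorem of calculus
    have hfund : (∫ t in x..1, deriv φ t) = - φ x := by
      rw [intervalIntegral.integral_deriv_eq_sub
        (fun y _ => (hφ.differentiable one_ne_zero) y) (hφ'.intervalIntegrable x 1), hφ1]
      ring
    -- Cauchy–Schwarz
    have hcs := cs_integral (f := fun t => Real.exp (s * (m x - m t)))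
      (g := fun t => Real.exp (s * m t) * deriv φ t) hx1
      ((Real.continuous_exp.comp (by fun_prop)).continuousOn)
      (((Real.continuous_exp.comp (by fun_prop)).mul hφ').continuousOn)
    have hprod : (∫ t in x..1,
        Real.exp (s * (m x - m t)) * (Real.exp (s * m t) * deriv φ t))
        = Real.exp (s * m x) * (- φ x) := by
      rw [← hfund, ← intervalIntegral.integral_const_mul]
      refine intervalIntegral.integral_congr (fun t _ => ?_)
      rw [show Real.exp (s * (m x - m t)) * (Real.exp (s * m t) * deriv φ t)
          = (Real.exp (s * (m x - m t)) * Real.exp (s * m t)) * deriv φ t by ring,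
        ← Real.exp_add]
      ring_nf
    have hsq1 : (∫ t in x..1, (Real.exp (s * (m x - m t))) ^ 2) = innerInt m s x := by
      rw [innerInt]
      refine intervalIntegral.integral_congr (fun t _ => ?_)
      rw [sq, ← Real.exp_add]
      ring_nf
    have hsq2 : (∫ t in x..1, (Real.exp (s * m t) * deriv φ t) ^ 2)
        = ∫ t in x..1, Real.exp (2 * s * m t) * (deriv φ t) ^ 2 := by
      refine intervalIntegral.integral_congr (fun t _ => ?_)
      rw [mul_pow, sq (Real.exp (s * m t)), ← Real.exp_add]
      ring_nf
    rw [hprod, hsq1, hsq2] at hcs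
    have hIle : (∫ t in x..1, Real.exp (2 * s * m t) * (deriv φ t) ^ 2) ≤ A := by
      apply intervalIntegral.integral_mono_interval hx.1 hx1 le_rfl
      · filter_upwards with t
        exact mul_nonneg (Real.exp_pos _).le (sq_nonneg _)
      · exact intW2 hm s hφ'
    have hInonneg : 0 ≤ innerInt m s x :=
      intervalIntegral.integral_nonneg hx1 (fun t _ => (Real.exp_pos _).le)
    have hexp : (Real.exp (s * m x) * (- φ x)) ^ 2
        = Real.exp (2 * s * m x) * (φ x) ^ 2 := by
      rw [mul_pow, sq (Real.exp (s * m x)), ← Real.exp_add]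
      ring_nf
    calc Real.exp (2 * s * m x) * (φ x) ^ 2
        = (Real.exp (s * m x) * (- φ x)) ^ 2 := hexp.symm
      _ ≤ innerInt m s x * ∫ t in x..1, Real.exp (2 * s * m t) * (deriv φ t) ^ 2 := hcs
      _ ≤ innerInt m s x * A := by
          exact mul_le_mul_of_nonneg_left hIle hInonneg
  calc (∫ x in (0:ℝ)..1, Real.exp (2 * s * m x) * (φ x) ^ 2)
      ≤ ∫ x in (0:ℝ)..1, innerInt m s x * A := by
        apply intervalIntegral.integral_mono_on zero_le_one
          (intW2 hm s hφ.continuous)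
          (((innerInt_continuous hm s).mul continuous_const).intervalIntegrable 0 1)
        exact hptwise
    _ = FF m s * A := by
        rw [intervalIntegral.integral_mul_const, FF]

include hm in
/-- `FF` tends to `0` when `m` is strictly increasing on `[0,1]`. -/
lemma FF_tendsto_zero (hmono : StrictMonoOn m (Icc (0:ℝ) 1)) :
    Tendsto (FF m) atTop (𝓝 0) := by
  have hmon : MonotoneOn m (Icc (0:ℝ) 1) := hmono.monotoneOn
  have h0 : (0:ℝ) = ∫ x in (0:ℝ)..1, (0:ℝ) := by simp
  rw [show (𝓝 (0:ℝ)) = 𝓝 (∫ x in (0:ℝ)..1, (0:ℝ)) by rw [← h0]]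
  apply intervalIntegral.tendsto_integral_filter_of_dominated_convergence
    (bound := fun _ => (1:ℝ))
  · filter_upwards with s
    exact ((innerInt_continuous hm s)).aestronglyMeasurable.restrict
  · filter_upwards [eventually_ge_atTop (0:ℝ)] with s hs
    filter_upwards with x hx
    rw [Set.uIoc_of_le zero_le_one] at hx
    have hx1 : x ≤ 1 := hx.2
    have hInonneg : 0 ≤ innerInt m s x :=
      intervalIntegral.integral_nonneg hx1 (fun t _ => (Real.exp_pos _).le)
    rw [Real.norm_eq_abs, abs_of_nonneg hInonneg]
    have : innerInt m s x ≤ ∫ t in x..1, (1:ℝ) := by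
      apply intervalIntegral.integral_mono_on hx1
        ((Real.continuous_exp.comp (by fun_prop)).intervalIntegrable x 1)
        intervalIntegrable_const
      intro t ht
      have hmt : m x ≤ m t := hmon ⟨hx.1.le, hx1⟩ ⟨hx.1.le.trans ht.1, ht.2⟩ ht.1
      show Real.exp (2 * s * (m x - m t)) ≤ 1
      rw [show (1:ℝ) = Real.exp 0 by simp]
      exact Real.exp_le_exp.mpr (by nlinarith [mul_nonneg hs (sub_nonneg.mpr hmt)])
    simp only [intervalIntegral.integral_const, smul_eq_mul, mul_one] at this
    linarith [hx.1]
  · exact intervalIntegrable_const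
  · filter_upwards with x hx
    rw [Set.uIoc_of_le zero_le_one] at hx
    rcases eq_or_lt_of_le hx.2 with h1 | h1
    · have : ∀ s : ℝ, innerInt m s x = 0 := by
        intro s; rw [innerInt, h1, intervalIntegral.integral_same]
      simpa [this] using tendsto_const_nhds
    · -- inner DCT
      have h0' : (0:ℝ) = ∫ t in x..1, (0:ℝ) := by simp
      rw [show (𝓝 (0:ℝ)) = 𝓝 (∫ t in x..1, (0:ℝ)) by rw [← h0']]
      apply intervalIntegral.tendsto_integral_filter_of_dominated_convergence
        (bound := fun _ => (1:ℝ))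
      · filter_upwards with s
        exact (Real.continuous_exp.comp (by fun_prop)).aestronglyMeasurable.restrict
      · filter_upwards [eventually_ge_atTop (0:ℝ)] with s hs
        filter_upwards with t ht
        rw [Set.uIoc_of_le h1.le] at ht
        have hmt : m x ≤ m t := hmon ⟨hx.1.le, hx.2⟩ ⟨(hx.1.trans ht.1).le, ht.2⟩ ht.1.le
        rw [Real.norm_eq_abs, abs_of_nonneg (Real.exp_pos _).le]
        rw [show (1:ℝ) = Real.exp 0 by simp]
        exact Real.exp_le_exp.mpr (by nlinarith [mul_nonneg hs (sub_nonneg.mpr hmt)])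
      · exact intervalIntegrable_const
      · filter_upwards with t ht
        rw [Set.uIoc_of_le h1.le] at ht
        have hmt : m x < m t := hmono ⟨hx.1.le, hx.2⟩ ⟨(hx.1.trans ht.1).le, ht.2⟩ ht.1
        have hr : 2 * (m x - m t) < 0 := by linarith
        have h2 : Tendsto (fun s : ℝ => s * (2 * (m x - m t))) atTop atBot :=
          Tendsto.atTop_mul_const_of_neg hr tendsto_id
        have h3 : Tendsto (fun s : ℝ => Real.exp (s * (2 * (m x - m t)))) atTop (𝓝 0) :=
          Real.tendsto_exp_atBot.comp h2
        refine h3.congr (fun s => ?_)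
        ring_nf

end backward
/-- For `m` nonconstant whose derivative changes sign at most finitely many times,
the mixed Neumann–Dirichlet principal eigenvalue `λ₁^𝒩𝒟(s)` tends to `∞` as
`s → ∞` iff `m` is strictly increasing on `[0,1]`. -/
theorem lambdaND_tendsto_atTop_iff
    (m c : ℝ → ℝ) (hm : ContDiff ℝ 2 m) (hc : Continuous c)
    (hnc : ¬ ∀ x ∈ Set.Icc (0:ℝ) 1, m x = m 0)
    (hsign : ∃ N : ℕ, 0 < N ∧ ∃ t : ℕ → ℝ, t 0 = 0 ∧ t N = 1 ∧
      (∀ k < N, t k < t (k + 1)) ∧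
      (∀ k < N, (∀ x ∈ Set.Icc (t k) (t (k + 1)), 0 ≤ deriv m x) ∨
                (∀ x ∈ Set.Icc (t k) (t (k + 1)), deriv m x ≤ 0))) :
    Tendsto (lambdaND m c) Filter.atTop Filter.atTop ↔
      StrictMonoOn m (Set.Icc (0:ℝ) 1) := by
  obtain ⟨C, hC0, hC⟩ : ∃ C : ℝ, 0 ≤ C ∧ ∀ x ∈ Icc (0:ℝ) 1, |c x| ≤ C := by
    obtain ⟨C, hCb⟩ := (isCompact_Icc (a := (0:ℝ)) (b := 1)).exists_bound_of_continuousOn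
      hc.continuousOn
    exact ⟨max C 0, le_max_right _ _, fun x hx => (hCb x hx).trans (le_max_left _ _)⟩
  have hmc : Continuous m := hm.continuous
  constructor
  · intro htend
    by_contra hns
    obtain ⟨α, β, h0, hαβ, hβ, hanti⟩ := exists_antitone_interval hm hsign hns
    obtain ⟨K, hK⟩ := lambdaND_bounded_of_antitone hmc hc hC h0 hαβ hβ hanti
    obtain ⟨s, hsgt, hs0⟩ :=
      ((htend.eventually_gt_atTop K).and (eventually_ge_atTop (0:ℝ))).exists
    linarith [hK s hs0]
  · intro hmono
    have hFz := FF_tendsto_zero hmc hmono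
    have hFpos : ∀ s : ℝ, 0 < FF m s := FF_pos hmc
    have hlow : ∀ s : ℝ, (FF m s)⁻¹ - C ≤ lambdaND m c s := by
      intro s
      rw [lambdaND_eq]
      apply le_csInf (ndset_nonempty hmc s)
      intro l hl
      obtain ⟨φ, hφ, hφ1, hnorm, hle⟩ := mem_lower_bound hmc hc s hC hl
      have hkey := key_cs hmc s hφ hφ1
      rw [hnorm] at hkey
      have hinv : (FF m s)⁻¹
          ≤ ∫ x in (0:ℝ)..1, Real.exp (2 * s * m x) * (deriv φ x) ^ 2 := by
        rw [inv_eq_one_div, div_le_iff₀ (hFpos s), mul_comm]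
        linarith
      linarith
    have htend2 : Tendsto (fun s => (FF m s)⁻¹ - C) atTop atTop := by
      have h1 : Tendsto (FF m) atTop (𝓝[>] 0) :=
        tendsto_nhdsWithin_of_tendsto_nhds_of_eventually_within _ hFz
          (Eventually.of_forall (fun s => hFpos s))
      have h2 : Tendsto (fun s => (FF m s)⁻¹) atTop atTop :=
        tendsto_inv_nhdsGT_zero.comp h1
      simpa [sub_eq_add_neg] using tendsto_atTop_add_const_right atTop (-C) h2
    exact tendsto_atTop_mono' atTop (Eventually.of_forall hlow) htend2
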